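/- Let d = 1, R(z) = |z|, and for n ∈ ℕ, n ≥ 1, let ℓ_n : [0,2] → ℝ be given by ℓ_n(t) = 0 for t ∈ [0,1], ℓ_n(t) = (n/2)(t−1) for t ∈ (1, 1+1/n), ℓ_n(t) = 0 for t ∈ [1+1/n, 2], and let z_n : [0,2] → ℝ be given by z_n(t) = 0 for t ∈ [0,1], z_n(t) = (n/2)(t−1) for t ∈ (1, 1+1/n), z_n(t) = 1/2 for t ∈ [1+1/n, 2]. Then z_n is Lipschitz, z_n(0) = 0, and z_n is a differential solution of the rate-independent system: for a.e. t ∈ (0,2), 0 ∈ ∂R(ż_n(t)) + z_n(t) − 1 − ℓ_n(t), where ∂R(v) = {v/|v|} if v ≠ 0 and ∂R(0) = [−1,1]. (Section 4.2) -/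
import Mathlib


open MeasureTheory Set Filter
open scoped Topology NNReal

noncomputable section

/-- The convex subdifferential of `R(z) = |z|`. -/
def subAbs (v : ℝ) : Set ℝ := if v = 0 then Icc (-1) 1 else {v / |v|}

/-- The loads (4.32) of the second counterexample. -/
def loadn (n : ℕ) (t : ℝ) : ℝ :=
  if t ≤ 1 then 0 else if t < 1 + 1 / (n : ℝ) then ((n : ℝ) / 2) * (t - 1) else 0

/-- The states (4.35). -/
def zn (n : ℕ) (t : ℝ) : ℝ :=
  if t ≤ 1 then 0 else if t < 1 + 1 / (n : ℝ) then ((n : ℝ) / 2) * (t - 1) else 1 / 2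

/-- The a.e. derivative of `zₙ`. -/
def z'n (n : ℕ) (t : ℝ) : ℝ :=
  if t ≤ 1 then 0 else if t < 1 + 1 / (n : ℝ) then (n : ℝ) / 2 else 0

lemma zn_eq_min (n : ℕ) (hn : 1 ≤ n) :
    zn n = fun t => min (1 / 2) (((n : ℝ) / 2) * max (t - 1) 0) := by
  have hnpos : (0 : ℝ) < (n : ℝ) := by exact_mod_cast hn
  funext t
  unfold zn
  rcases le_or_gt t 1 with h | h
  · simp [h, max_eq_right (by linarith : t - 1 ≤ 0), le_of_lt]
  · have hmax : max (t - 1) 0 = t - 1 := max_eq_left (by linarith)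
    rw [if_neg (not_le.mpr h), hmax]
    rcases lt_or_ge t (1 + 1 / (n : ℝ)) with h2 | h2
    · rw [if_pos h2]
      have : ((n : ℝ) / 2) * (t - 1) < 1 / 2 := by
        have := (lt_div_iff₀ hnpos).mp (by linarith : t - 1 < 1 / (n : ℝ))
        nlinarith
      exact (min_eq_right this.le).symm
    · rw [if_neg (not_lt.mpr h2)]
      have : (1 : ℝ) / 2 ≤ ((n : ℝ) / 2) * (t - 1) := by
        have h3 : 1 / (n : ℝ) ≤ t - 1 := by linarith
        have := (div_le_iff₀ hnpos).mp h3
        nlinarith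
      exact (min_eq_left this).symm

/-- **Section 4.2.** `zₙ` is a differential solution of the rate-independent system
`0 ∈ ∂R(żₙ(t)) + zₙ(t) - 1 - ℓₙ(t)` with `zₙ(0) = 0`. -/
theorem second_counterexample_differential_solutions (n : ℕ) (hn : 1 ≤ n) :
    (∃ L : ℝ≥0, LipschitzOnWith L (zn n) (Icc 0 2)) ∧
    zn n 0 = 0 ∧
    (∀ᵐ t ∂(volume.restrict (Ioo (0 : ℝ) 2)),
      HasDerivAt (zn n) (z'n n t) t ∧
        ∃ w ∈ subAbs (z'n n t), w + (zn n t - 1 - loadn n t) = 0) := by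
  have hnpos : (0 : ℝ) < (n : ℝ) := by exact_mod_cast hn
  have hinv : (0 : ℝ) < 1 / (n : ℝ) := by positivity
  refine ⟨?_, ?_, ?_⟩
  · -- Lipschitz
    refine ⟨‖(n : ℝ) / 2‖₊ * 1, ?_⟩
    rw [zn_eq_min n hn]
    have h1 : LipschitzWith 1 (fun t : ℝ => max (t - 1) 0) := by
      have : LipschitzWith 1 (fun t : ℝ => t - 1) :=
        LipschitzWith.of_dist_le_mul fun x y => by
          simp [Real.dist_eq]
      exact this.max_const 0
    have h2 : LipschitzWith (‖(n : ℝ) / 2‖₊ * 1)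
        (fun t : ℝ => ((n : ℝ) / 2) * max (t - 1) 0) :=
      (lipschitzWith_smul ((n : ℝ) / 2)).comp h1
    exact (h2.const_min (1 / 2)).lipschitzOnWith
  · simp [zn]
  · -- a.e. statement
    have hnull : (volume : Measure ℝ) ({1, 1 + 1 / (n : ℝ)} : Set ℝ) = 0 :=
      measure_union_null (measure_singleton _) (measure_singleton _)
    have hae : ∀ᵐ t ∂(volume : Measure ℝ), t ∉ ({1, 1 + 1 / (n : ℝ)} : Set ℝ) :=
      compl_mem_ae_iff.mpr hnull
    refine (ae_restrict_iff' measurableSet_Ioo).mpr ?_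
    filter_upwards [hae] with t ht _
    simp only [mem_insert_iff, mem_singleton_iff, not_or] at ht
    obtain ⟨ht1, ht2⟩ := ht
    rcases lt_trichotomy t 1 with h | h | h
    · -- t < 1
      have hev : zn n =ᶠ[𝓝 t] fun _ => (0 : ℝ) := by
        filter_upwards [Iio_mem_nhds h] with s hs
        simp only [zn]
        rw [if_pos (le_of_lt hs)]
      have hd : HasDerivAt (zn n) 0 t :=
        (hasDerivAt_const t (0 : ℝ)).congr_of_eventuallyEq hev
      have hz' : z'n n t = 0 := by simp [z'n, h.le]
      refine ⟨hz' ▸ hd, 1, ?_, ?_⟩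
      · rw [hz']; simp [subAbs]
      · simp [zn, loadn, h.le]
    · exact absurd h ht1
    · rcases lt_trichotomy t (1 + 1 / (n : ℝ)) with h2 | h2 | h2
      · -- 1 < t < 1 + 1/n
        have hev : zn n =ᶠ[𝓝 t] fun s => ((n : ℝ) / 2) * (s - 1) := by
          filter_upwards [Ioo_mem_nhds h h2] with s hs
          simp only [zn]
          rw [if_neg (not_le.mpr hs.1), if_pos hs.2]
        have hd0 : HasDerivAt (fun s : ℝ => ((n : ℝ) / 2) * (s - 1)) ((n : ℝ) / 2) t := by
          simpa using (((hasDerivAt_id t).sub_const 1).const_mul ((n : ℝ) / 2))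
        have hd : HasDerivAt (zn n) ((n : ℝ) / 2) t := hd0.congr_of_eventuallyEq hev
        have hz' : z'n n t = (n : ℝ) / 2 := by
          simp only [z'n]; rw [if_neg (not_le.mpr h), if_pos h2]
        refine ⟨hz' ▸ hd, 1, ?_, ?_⟩
        · rw [hz']
          have hne : (n : ℝ) / 2 ≠ 0 := by positivity
          simp [subAbs, hne, abs_of_pos (by positivity : (0 : ℝ) < (n : ℝ) / 2)]
        · simp only [zn, loadn]
          rw [if_neg (not_le.mpr h), if_pos h2, if_neg (not_le.mpr h), if_pos h2]
          ring
      · exact absurd h2 ht2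
      · -- t > 1 + 1/n
        have hev : zn n =ᶠ[𝓝 t] fun _ => (1 : ℝ) / 2 := by
          filter_upwards [Ioi_mem_nhds h2] with s hs
          have : (1 : ℝ) < s := lt_trans (by linarith) hs
          simp only [zn]
          rw [if_neg (not_le.mpr this), if_neg (not_lt.mpr (le_of_lt (mem_Ioi.mp hs)))]
        have hd : HasDerivAt (zn n) 0 t :=
          (hasDerivAt_const t ((1 : ℝ) / 2)).congr_of_eventuallyEq hev
        have hz' : z'n n t = 0 := by
          simp only [z'n]; rw [if_neg (not_le.mpr h), if_neg (not_lt.mpr h2.le)]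
        refine ⟨hz' ▸ hd, 1 / 2, ?_, ?_⟩
        · rw [hz']; simp [subAbs]; norm_num
        · simp only [zn, loadn]
          rw [if_neg (not_le.mpr h), if_neg (not_lt.mpr h2.le), if_neg (not_le.mpr h),
            if_neg (not_lt.mpr h2.le)]
          norm_num

end
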